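/- arXiv:0909.0227 — 7 statements merged into one kernel-verified Lean document; each statement's English description precedes it below -/
import Mathlib

section
/- If x₀, x₁, x₂ are elements of a field k with char(k) ≠ 2, 3 such that x₀³, x₁³, x₂³ form an arithmetic progression (i.e., x₁³ - x₀³ = x₂³ - x₁³), then the point [6x₁ : 9(x₀ - x₂) : x₀ + x₂] satisfies the projective equation z·y² = x³ - 27·z³. -/
/-- If `x₀³, x₁³, x₂³` form an arithmetic progression in a field `k` with
`char k ≠ 2, 3`, then `[6x₁ : 9(x₀ - x₂) : x₀ + x₂]` satisfies `z·y² = x³ - 27z³`. -/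
theorem stmt_0 {k : Type*} [Field k] (h2 : ringChar k ≠ 2) (h3 : ringChar k ≠ 3)
    (x₀ x₁ x₂ : k) (hAP : x₁ ^ 3 - x₀ ^ 3 = x₂ ^ 3 - x₁ ^ 3) :
    (x₀ + x₂) * (9 * (x₀ - x₂)) ^ 2 = (6 * x₁) ^ 3 - 27 * (x₀ + x₂) ^ 3 := by
  linear_combination (-108:k) * hAP
end

section
/- If (x, y, z) is a point in a field k with char(k) ≠ 2, 3 satisfying z·y² = x³ - 27·z³, and we set x₀ = 9z + y, x₁ = 3x, x₂ = 9z - y, then x₀³, x₁³, x₂³ form an arithmetic progression, i.e., x₁³ - x₀³ = x₂³ - x₁³. -/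
/-- If `(x, y, z)` satisfies `z·y² = x³ - 27z³` in a field `k` with `char k ≠ 2, 3`,
then with `x₀ = 9z + y`, `x₁ = 3x`, `x₂ = 9z - y`, the cubes `x₀³, x₁³, x₂³` form an
arithmetic progression. -/
theorem stmt_1 {k : Type*} [Field k] (h2 : ringChar k ≠ 2) (h3 : ringChar k ≠ 3)
    (x y z : k) (hE : z * y ^ 2 = x ^ 3 - 27 * z ^ 3) :
    (3 * x) ^ 3 - (9 * z + y) ^ 3 = (9 * z - y) ^ 3 - (3 * x) ^ 3 := by
  linear_combination -54 * hE
end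

section
/- Over any field k of characteristic ≠ 2, 3, the maps φ([x₀:x₁:x₂]) = [6x₁ : 9(x₀-x₂) : x₀+x₂] and φ⁻¹([x:y:z]) = [(9z+y)/18 : x/6 : (9z-y)/18] are mutually inverse bijections between the solution sets of X₀³ - 2X₁³ + X₂³ = 0 and z·y² = x³ - 27z³ in ℙ²(k). -/
/-- Over a field `k` of characteristic ≠ 2, 3, the maps
`φ([x₀:x₁:x₂]) = [6x₁ : 9(x₀-x₂) : x₀+x₂]` and
`φ⁻¹([x:y:z]) = [(9z+y)/18 : x/6 : (9z-y)/18]` are mutually inverse bijections between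
the solution sets of `X₀³ - 2X₁³ + X₂³ = 0` and `z·y² = x³ - 27z³` in `ℙ²(k)`:
they map solutions (nonzero coordinate triples) to solutions, and are inverse to each
other on representatives. -/
theorem stmt_3 {k : Type*} [Field k] (h2 : ringChar k ≠ 2) (h3 : ringChar k ≠ 3) :
    (∀ x₀ x₁ x₂ : k, (x₀, x₁, x₂) ≠ (0, 0, 0) → x₀ ^ 3 - 2 * x₁ ^ 3 + x₂ ^ 3 = 0 →
      (6 * x₁, 9 * (x₀ - x₂), x₀ + x₂) ≠ (0, 0, 0) ∧
      (x₀ + x₂) * (9 * (x₀ - x₂)) ^ 2 = (6 * x₁) ^ 3 - 27 * (x₀ + x₂) ^ 3 ∧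
      ((9 * (x₀ + x₂) + 9 * (x₀ - x₂)) / 18, (6 * x₁) / 6,
        (9 * (x₀ + x₂) - 9 * (x₀ - x₂)) / 18) = (x₀, x₁, x₂)) ∧
    (∀ x y z : k, (x, y, z) ≠ (0, 0, 0) → z * y ^ 2 = x ^ 3 - 27 * z ^ 3 →
      ((9 * z + y) / 18, x / 6, (9 * z - y) / 18) ≠ (0, 0, 0) ∧
      ((9 * z + y) / 18) ^ 3 - 2 * (x / 6) ^ 3 + ((9 * z - y) / 18) ^ 3 = 0 ∧
      (6 * (x / 6), 9 * ((9 * z + y) / 18 - (9 * z - y) / 18),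
        (9 * z + y) / 18 + (9 * z - y) / 18) = (x, y, z)) := by
  have hk2 : (2 : k) ≠ 0 := by
    intro h
    have hd : ringChar k ∣ 2 := (ringChar.spec k 2).mp (by exact_mod_cast h)
    rcases (Nat.dvd_prime Nat.prime_two).mp hd with h1 | h1
    · have : ((1 : ℕ) : k) = 0 := (ringChar.spec k 1).mpr (h1 ▸ dvd_refl _)
      exact one_ne_zero (α := k) (by exact_mod_cast this)
    · exact h2 h1
  have hk3 : (3 : k) ≠ 0 := by
    intro h
    have hd : ringChar k ∣ 3 := (ringChar.spec k 3).mp (by exact_mod_cast h)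
    rcases (Nat.dvd_prime Nat.prime_three).mp hd with h1 | h1
    · have : ((1 : ℕ) : k) = 0 := (ringChar.spec k 1).mpr (h1 ▸ dvd_refl _)
      exact one_ne_zero (α := k) (by exact_mod_cast this)
    · exact h3 h1
  have hk6 : (6 : k) ≠ 0 := by
    have : (6 : k) = 2 * 3 := by norm_num
    rw [this]; exact mul_ne_zero hk2 hk3
  have hk9 : (9 : k) ≠ 0 := by
    have : (9 : k) = 3 * 3 := by norm_num
    rw [this]; exact mul_ne_zero hk3 hk3
  have hk18 : (18 : k) ≠ 0 := by
    have : (18 : k) = 2 * 9 := by norm_num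
    rw [this]; exact mul_ne_zero hk2 hk9
  constructor
  · intro x₀ x₁ x₂ hnz hc
    refine ⟨?_, ?_, ?_⟩
    · intro h
      rw [Prod.mk.injEq, Prod.mk.injEq] at h
      obtain ⟨ha, hb, hcc⟩ := h
      have h1 : x₁ = 0 := by
        have := mul_eq_zero.mp ha
        tauto
      have hab : x₀ - x₂ = 0 := by
        have := mul_eq_zero.mp hb
        tauto
      have h0 : x₀ = 0 := by
        have : (2 : k) * x₀ = 0 := by linear_combination hab + hcc
        rcases mul_eq_zero.mp this with h | h
        · exact absurd h hk2
        · exact h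
      have h2' : x₂ = 0 := by linear_combination h0 - hab
      exact hnz (by simp [h0, h1, h2'])
    · linear_combination 108 * hc
    · rw [Prod.mk.injEq, Prod.mk.injEq]
      refine ⟨?_, ?_, ?_⟩ <;> field_simp <;> ring
  · intro x y z hnz hc
    refine ⟨?_, ?_, ?_⟩
    · intro h
      rw [Prod.mk.injEq, Prod.mk.injEq] at h
      obtain ⟨ha, hb, hcc⟩ := h
      have ha' : 9 * z + y = 0 := by
        rcases div_eq_zero_iff.mp ha with h | h
        · exact h
        · exact absurd h hk18
      have hc' : 9 * z - y = 0 := by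
        rcases div_eq_zero_iff.mp hcc with h | h
        · exact h
        · exact absurd h hk18
      have hx : x = 0 := by
        rcases div_eq_zero_iff.mp hb with h | h
        · exact h
        · exact absurd h hk6
      have hz : z = 0 := by
        have : (18 : k) * z = 0 := by linear_combination ha' + hc'
        rcases mul_eq_zero.mp this with h | h
        · exact absurd h hk18
        · exact h
      have hy : y = 0 := by linear_combination ha' - 9 * hz
      exact hnz (by simp [hx, hy, hz])
    · field_simp
      linear_combination 11664 * hc
    · rw [Prod.mk.injEq, Prod.mk.injEq]
      refine ⟨?_, ?_, ?_⟩ <;> field_simp <;> ring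
end

section
/- The only rational points on the elliptic curve y² = x³ - 27 over ℚ are the point at infinity and (3, 0); equivalently, the Mordell–Weil group E(ℚ) is isomorphic to ℤ/2ℤ. -/
set_option maxHeartbeats 1000000

namespace Aux27

lemma not_unit_three : ¬ IsUnit (3 : ℤ) := by decide

lemma int3 {x : ℤ} {k : ℕ} (h : (3:ℤ) ∣ x ^ k) : (3:ℤ) ∣ x :=
  Int.prime_three.dvd_of_dvd_pow h

lemma int_prime_of_nat {p : ℕ} (hp : p.Prime) : Prime (p : ℤ) :=
  Nat.prime_iff_prime_int.mp hp

lemma dvd3_of_sq_add_pow4 {x y : ℤ} (h : (3:ℤ) ∣ x ^ 2 + y ^ 4) : (3:ℤ) ∣ x := by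
  have h0 : ((x : ZMod 3) ^ 2 + (y : ZMod 3) ^ 4) = 0 := by
    have := (ZMod.intCast_zmod_eq_zero_iff_dvd _ 3).mpr h
    push_cast at this
    exact this
  have key : ∀ a b : ZMod 3, a ^ 2 + b ^ 4 = 0 → a = 0 := by decide
  exact (ZMod.intCast_zmod_eq_zero_iff_dvd _ 3).mp (key _ _ h0)

lemma mod8 : ∀ k u v : ZMod 8,
    v ^ 2 ≠ u ^ 4 + 9 * u ^ 2 * (2 * k + 1) ^ 2 + 27 * (2 * k + 1) ^ 4 := by decide

lemma natPow4 {a b c : ℕ} (h : Nat.Coprime a b) (heq : a * b = c ^ 4) : ∃ d, a = d ^ 4 :=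
  exists_eq_pow_of_mul_eq_pow (Nat.isUnit_iff.mpr h) heq

lemma intPow4 {a b c : ℤ} (ha : 0 ≤ a) (h : IsCoprime a b) (heq : a * b = c ^ 4) :
    ∃ d : ℤ, 0 ≤ d ∧ a = d ^ 4 := by
  have hn : Nat.Coprime a.natAbs b.natAbs := Int.isCoprime_iff_nat_coprime.mp h
  have hm : a.natAbs * b.natAbs = c.natAbs ^ 4 := by
    rw [← Int.natAbs_mul, heq, Int.natAbs_pow]
  obtain ⟨d, hd⟩ := natPow4 hn hm
  refine ⟨(d : ℤ), Int.natCast_nonneg d, ?_⟩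
  have := Int.natAbs_of_nonneg ha
  rw [← this, hd]
  push_cast
  ring

lemma factor27 {a b k : ℤ} (ha : 0 ≤ a) (hb : 0 ≤ b) (h : IsCoprime a b)
    (heq : a * b = 27 * k ^ 4) :
    ∃ m n : ℤ, 0 ≤ m ∧ 0 ≤ n ∧ ((a = m ^ 4 ∧ b = 27 * n ^ 4) ∨ (a = 27 * m ^ 4 ∧ b = n ^ 4)) := by
  have h3 : (3:ℤ) ∣ a * b := ⟨9 * k ^ 4, by linarith⟩
  have hcase := (Int.prime_three.dvd_mul).mp h3
  have main : ∀ a b : ℤ, 0 ≤ a → 0 ≤ b → IsCoprime a b → a * b = 27 * k ^ 4 →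
      (3:ℤ) ∣ b → ∃ m n : ℤ, 0 ≤ m ∧ 0 ≤ n ∧ a = m ^ 4 ∧ b = 27 * n ^ 4 := by
    intro a b ha hb h heq h3b
    have h3a : ¬ (3:ℤ) ∣ a := fun h3a => not_unit_three (h.isUnit_of_dvd' h3a h3b)
    have hc3a : IsCoprime (3:ℤ) a :=
      (Int.prime_three.irreducible.coprime_iff_not_dvd).mpr h3a
    have hc27a : IsCoprime (27:ℤ) a := by
      have h27 := hc3a.pow_left (m := 3)
      norm_num at h27
      exact h27
    have h27b : (27:ℤ) ∣ b :=
      hc27a.dvd_of_dvd_mul_left ⟨k ^ 4, by linarith⟩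
    obtain ⟨b', rfl⟩ := h27b
    have hb' : 0 ≤ b' := by linarith
    have heq' : a * b' = k ^ 4 := by
      have h27' : (27:ℤ) * (a * b') = 27 * k ^ 4 := by linarith [heq]
      exact mul_left_cancel₀ (by norm_num) h27'
    have hcop' : IsCoprime a b' := h.of_isCoprime_of_dvd_right ⟨27, by ring⟩
    obtain ⟨m, hm0, hm⟩ := intPow4 ha hcop' heq'
    obtain ⟨n, hn0, hn⟩ := intPow4 hb' hcop'.symm (by linarith [heq'] : b' * a = k ^ 4)
    exact ⟨m, n, hm0, hn0, hm, by rw [hn]⟩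
  rcases hcase with h3a | h3b
  · obtain ⟨n, m, hn, hm, h1, h2⟩ := main b a hb ha h.symm (by linarith [heq]) h3a
    exact ⟨m, n, hm, hn, Or.inr ⟨h2, h1⟩⟩
  · obtain ⟨m, n, hm, hn, h1, h2⟩ := main a b ha hb h heq h3b
    exact ⟨m, n, hm, hn, Or.inl ⟨h1, h2⟩⟩



lemma pow4_natAbs_eq {x y : ℤ} (h : x ^ 4 = y ^ 4) : x.natAbs = y.natAbs := by
  have h' : x.natAbs ^ 4 = y.natAbs ^ 4 := by
    rw [← Int.natAbs_pow, ← Int.natAbs_pow, h]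
  exact Nat.pow_left_injective (by norm_num) h'

lemma sq_eq_of_pow4 {x y : ℤ} (h : x ^ 4 = y ^ 4) : x ^ 2 = y ^ 2 := by
  have h' := pow4_natAbs_eq h
  have h1 : x.natAbs ^ 2 = y.natAbs ^ 2 := by rw [h']
  have h2 : (x.natAbs : ℤ) ^ 2 = (y.natAbs : ℤ) ^ 2 := by exact_mod_cast h1
  rwa [Int.natAbs_sq, Int.natAbs_sq] at h2

theorem descent : ∀ N : ℕ,
    (∀ u c v : ℤ, 2 * c.natAbs ≤ N → IsCoprime u c →
      v ^ 2 = u ^ 4 + 9 * u ^ 2 * c ^ 2 + 27 * c ^ 4 → c = 0) ∧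
    (∀ m n u : ℤ, 2 * n.natAbs + 1 ≤ N → IsCoprime m n →
      u ^ 2 = m ^ 4 - 18 * m ^ 2 * n ^ 2 - 27 * n ^ 4 → n = 0) := by
  intro N
  induction N using Nat.strong_induction_on with
  | _ N ih =>
  constructor
  · -- Part A
    intro u c v hN hco hv
    by_contra hc0
    -- use V := |v| ≥ 0
    obtain ⟨V, hVnn, hV⟩ : ∃ V : ℤ, 0 ≤ V ∧ V ^ 2 = u ^ 4 + 9 * u ^ 2 * c ^ 2 + 27 * c ^ 4 :=
      ⟨|v|, abs_nonneg v, by rw [sq_abs]; exact hv⟩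
    clear hv
    -- 3 ∤ u
    have h3u : ¬ (3:ℤ) ∣ u := by
      rintro ⟨u₁, rfl⟩
      obtain ⟨v₁, rfl⟩ : (3:ℤ) ∣ V :=
        int3 (k := 2) ⟨27 * u₁ ^ 4 + 27 * u₁ ^ 2 * c ^ 2 + 9 * c ^ 4, by linear_combination hV⟩
      have h1 : v₁ ^ 2 = 9 * u₁ ^ 4 + 9 * u₁ ^ 2 * c ^ 2 + 3 * c ^ 4 :=
        mul_left_cancel₀ (by norm_num : (9:ℤ) ≠ 0) (by linear_combination hV)
      obtain ⟨v₂, rfl⟩ : (3:ℤ) ∣ v₁ :=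
        int3 (k := 2) ⟨3 * u₁ ^ 4 + 3 * u₁ ^ 2 * c ^ 2 + c ^ 4, by linear_combination h1⟩
      have h2 : 3 * v₂ ^ 2 = 3 * u₁ ^ 4 + 3 * u₁ ^ 2 * c ^ 2 + c ^ 4 :=
        mul_left_cancel₀ (by norm_num : (3:ℤ) ≠ 0) (by linear_combination h1)
      have h3c : (3:ℤ) ∣ c :=
        int3 (k := 4) ⟨v₂ ^ 2 - u₁ ^ 4 - u₁ ^ 2 * c ^ 2, by linear_combination -h2⟩
      exact not_unit_three (hco.isUnit_of_dvd' ⟨u₁, rfl⟩ h3c)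
    -- c is even
    have hceven : (2:ℤ) ∣ c := by
      rcases Int.even_or_odd c with he | ho
      · exact he.two_dvd
      · exfalso
        obtain ⟨k, rfl⟩ := ho
        have h8 := congrArg (fun t : ℤ => (t : ZMod 8)) hV
        push_cast at h8
        exact mod8 (k : ZMod 8) (u : ZMod 8) (V : ZMod 8) h8
    obtain ⟨c₁, rfl⟩ := hceven
    have hc₁ : c₁ ≠ 0 := by rintro rfl; exact hc0 (by ring)
    have hc₁4 : (0:ℤ) < c₁ ^ 4 := by positivity
    -- V > 0
    have hVpos : 0 < V := by
      rcases hVnn.lt_or_eq with h | h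
      · exact h
      · exfalso; nlinarith [sq_nonneg u, sq_nonneg (u^2)]
    -- the two factors
    set a : ℤ := V - u ^ 2 - 18 * c₁ ^ 2 with ha_def
    set b : ℤ := V + u ^ 2 + 18 * c₁ ^ 2 with hb_def
    have hab : a * b = 108 * c₁ ^ 4 := by rw [ha_def, hb_def]; linear_combination hV
    have hbpos : 0 < b := by rw [hb_def]; nlinarith [sq_nonneg u, sq_nonneg c₁]
    have hapos : 0 < a := by nlinarith
    -- both even
    have haeven : Even a := by
      by_contra hodd
      have hodd' : Odd a := Int.not_even_iff_odd.mp hodd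
      have hoddb : Odd b := by
        obtain ⟨r, hr⟩ := hodd'
        exact ⟨r + u ^ 2 + 18 * c₁ ^ 2, by rw [hb_def]; rw [ha_def] at hr; linarith⟩
      have : Odd (a * b) := hodd'.mul hoddb
      rw [hab] at this
      exact (Int.not_odd_iff_even.mpr ⟨54 * c₁ ^ 4, by ring⟩) this
    obtain ⟨A₁, hA₁⟩ := haeven
    have hB₁ : b = 2 * (V - A₁) := by
      rw [hb_def]
      rw [ha_def] at hA₁
      linarith
    set B₁ : ℤ := V - A₁ with hB₁def
    have hA₁' : a = 2 * A₁ := by rw [hA₁]; ring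
    have hA₁B₁ : A₁ * B₁ = 27 * c₁ ^ 4 := by
      have h4 : (4:ℤ) * (A₁ * B₁) = 4 * (27 * c₁ ^ 4) := by
        calc (4:ℤ) * (A₁ * B₁) = (2 * A₁) * (2 * B₁) := by ring
        _ = a * b := by rw [← hA₁', ← hB₁]
        _ = 108 * c₁ ^ 4 := hab
        _ = 4 * (27 * c₁ ^ 4) := by ring
      exact mul_left_cancel₀ (by norm_num) h4
    have hsub : B₁ - A₁ = u ^ 2 + 18 * c₁ ^ 2 := by
      have : 2 * (B₁ - A₁) = 2 * (u ^ 2 + 18 * c₁ ^ 2) := by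
        have := hA₁'
        have := hB₁
        rw [ha_def] at hA₁'
        rw [hb_def] at hB₁
        linarith
      exact mul_left_cancel₀ (by norm_num) this
    have hA₁pos : 0 < A₁ := by linarith [hA₁']
    have hB₁pos : 0 < B₁ := by linarith [hB₁]
    -- coprime
    have hcopAB : IsCoprime A₁ B₁ := by
      rw [Int.isCoprime_iff_gcd_eq_one]
      by_contra hg
      obtain ⟨p, hp, hpdvd⟩ := Nat.exists_prime_and_dvd hg
      have hpA : (p:ℤ) ∣ A₁ := dvd_trans (Int.natCast_dvd_natCast.mpr hpdvd) (Int.gcd_dvd_left _ _)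
      have hpB : (p:ℤ) ∣ B₁ := dvd_trans (Int.natCast_dvd_natCast.mpr hpdvd) (Int.gcd_dvd_right _ _)
      have hpprime : Prime (p:ℤ) := int_prime_of_nat hp
      have hp27 : (p:ℤ) ∣ 27 * c₁ ^ 4 := hA₁B₁ ▸ hpA.mul_right B₁
      have hpS : (p:ℤ) ∣ u ^ 2 + 18 * c₁ ^ 2 := hsub ▸ dvd_sub hpB hpA
      rcases hpprime.dvd_mul.mp hp27 with h27 | hc4
      · have hp3 : (p:ℤ) = 3 := by
          have h33 : (p:ℤ) ∣ 3 ^ 3 := by norm_num at h27 ⊢; exact h27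
          have h3' := hpprime.dvd_of_dvd_pow h33
          have hnat : p ∣ 3 := by exact_mod_cast h3'
          have := (Nat.prime_dvd_prime_iff_eq hp Nat.prime_three).mp hnat
          exact_mod_cast this
        rw [hp3] at hpS
        have h3u2 : (3:ℤ) ∣ u ^ 2 := by
          obtain ⟨t, ht⟩ := hpS
          exact ⟨t - 6 * c₁ ^ 2, by linarith⟩
        exact h3u (int3 (k := 2) h3u2)
      · have hpc : (p:ℤ) ∣ c₁ := hpprime.dvd_of_dvd_pow hc4
        have hpu2 : (p:ℤ) ∣ u ^ 2 := by
          obtain ⟨t, ht⟩ := hpc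
          obtain ⟨s, hs⟩ := hpS
          exact ⟨s - 18 * p * t ^ 2, by rw [ht] at hs; linarith [hs]⟩
        have hpu : (p:ℤ) ∣ u := hpprime.dvd_of_dvd_pow hpu2
        have hunit : IsUnit ((p:ℤ)) := hco.isUnit_of_dvd' hpu (hpc.mul_left 2)
        rw [Int.isUnit_iff] at hunit
        have := hp.two_le
        omega
    -- factor
    obtain ⟨m, n, hm0, hn0, hcase⟩ :=
      factor27 hA₁pos.le hB₁pos.le hcopAB hA₁B₁
    rcases hcase with ⟨hA, hB⟩ | ⟨hA, hB⟩
    · -- A₁ = m⁴, B₁ = 27 n⁴ : 3-adic contradiction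
      have hEq : u ^ 2 + m ^ 4 = 27 * n ^ 4 - 18 * c₁ ^ 2 - m ^ 4 + m ^ 4 := by
        have := hsub
        rw [hA, hB] at this
        linarith
      have h3d : (3:ℤ) ∣ u ^ 2 + m ^ 4 := by
        have hx : u ^ 2 + m ^ 4 = 27 * n ^ 4 - 18 * c₁ ^ 2 := by linarith [hEq]
        exact ⟨9 * n ^ 4 - 6 * c₁ ^ 2, by linarith⟩
      have h3uu := dvd3_of_sq_add_pow4 h3d
      exact h3u h3uu
    · -- A₁ = 27 m⁴, B₁ = n⁴ : descend to part B
      have hprod : (m * n) ^ 4 = c₁ ^ 4 := by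
        have : (27 * m ^ 4) * n ^ 4 = 27 * c₁ ^ 4 := by rw [← hA, ← hB]; exact hA₁B₁
        have h27 : (27:ℤ) * ((m * n) ^ 4) = 27 * (c₁ ^ 4) := by linear_combination this
        exact mul_left_cancel₀ (by norm_num) h27
      have hmn_ne : m * n ≠ 0 := by
        intro h0
        rw [h0] at hprod
        simp at hprod
        exact hc₁ (by nlinarith [hprod])
      have hm_ne : m ≠ 0 := fun h => hmn_ne (by rw [h, zero_mul])
      have hn_ne : n ≠ 0 := fun h => hmn_ne (by rw [h, mul_zero])
      have hc₁sq : c₁ ^ 2 = m ^ 2 * n ^ 2 := by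
        have := sq_eq_of_pow4 hprod.symm
        rw [this]; ring
      have hBeq : u ^ 2 = n ^ 4 - 18 * n ^ 2 * m ^ 2 - 27 * m ^ 4 := by
        have := hsub
        rw [hA, hB] at this
        nlinarith [this, hc₁sq]
      have hconm : IsCoprime n m := by
        have h1 : IsCoprime A₁ B₁ := hcopAB
        have hmA : m ∣ A₁ := by rw [hA]; exact ⟨27 * m ^ 3, by ring⟩
        have hnB : n ∣ B₁ := by rw [hB]; exact ⟨n ^ 3, by ring⟩
        exact ((h1.of_isCoprime_of_dvd_left hmA).of_isCoprime_of_dvd_right hnB).symm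
      -- measure bookkeeping
      have habs : m.natAbs * n.natAbs = c₁.natAbs := by
        have := pow4_natAbs_eq hprod
        rwa [Int.natAbs_mul] at this
      have hm1 : 0 < m.natAbs := Int.natAbs_pos.mpr hm_ne
      have hn1 : 0 < n.natAbs := Int.natAbs_pos.mpr hn_ne
      have hmle : m.natAbs ≤ c₁.natAbs := by
        have h3 := Nat.le_mul_of_pos_right m.natAbs hn1
        omega
      have hc₁abs : 0 < c₁.natAbs := Int.natAbs_pos.mpr hc₁
      have hNbig : 4 * c₁.natAbs ≤ N := by
        have h2 : ((2:ℤ) * c₁).natAbs = 2 * c₁.natAbs := by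
          rw [Int.natAbs_mul]; rfl
        omega
      have hres := (ih (N - 1) (by omega)).2 n m u (by omega) hconm hBeq
      exact hm_ne hres
  · -- Part B
    intro m n u hN hco hu
    by_contra hn0
    obtain ⟨U, hUnn, hU⟩ : ∃ U : ℤ, 0 ≤ U ∧ U ^ 2 = m ^ 4 - 18 * m ^ 2 * n ^ 2 - 27 * n ^ 4 :=
      ⟨|u|, abs_nonneg u, by rw [sq_abs]; exact hu⟩
    clear hu
    have hn4 : (0:ℤ) < n ^ 4 := by positivity
    have hn2 : (0:ℤ) < n ^ 2 := by positivity
    -- 3 ∤ m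
    have h3m : ¬ (3:ℤ) ∣ m := by
      rintro ⟨m₁, rfl⟩
      obtain ⟨U₁, rfl⟩ : (3:ℤ) ∣ U :=
        int3 (k := 2) ⟨27 * m₁ ^ 4 - 54 * m₁ ^ 2 * n ^ 2 - 9 * n ^ 4, by linear_combination hU⟩
      have h1 : U₁ ^ 2 = 9 * m₁ ^ 4 - 18 * m₁ ^ 2 * n ^ 2 - 3 * n ^ 4 :=
        mul_left_cancel₀ (by norm_num : (9:ℤ) ≠ 0) (by linear_combination hU)
      obtain ⟨U₂, rfl⟩ : (3:ℤ) ∣ U₁ :=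
        int3 (k := 2) ⟨3 * m₁ ^ 4 - 6 * m₁ ^ 2 * n ^ 2 - n ^ 4, by linear_combination h1⟩
      have h2 : 3 * U₂ ^ 2 = 3 * m₁ ^ 4 - 6 * m₁ ^ 2 * n ^ 2 - n ^ 4 :=
        mul_left_cancel₀ (by norm_num : (3:ℤ) ≠ 0) (by linear_combination h1)
      have h3n : (3:ℤ) ∣ n :=
        int3 (k := 4) ⟨m₁ ^ 4 - 2 * m₁ ^ 2 * n ^ 2 - U₂ ^ 2, by linear_combination h2⟩
      exact not_unit_three (hco.isUnit_of_dvd' ⟨m₁, rfl⟩ h3n)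
    have hm_ne : m ≠ 0 := by rintro rfl; exact h3m ⟨0, by ring⟩
    have hm2 : (0:ℤ) < m ^ 2 := by positivity
    -- m² > 18 n²
    have hkey : m ^ 2 * (m ^ 2 - 18 * n ^ 2) = U ^ 2 + 27 * n ^ 4 := by linear_combination -hU
    have h18 : 18 * n ^ 2 < m ^ 2 := by
      by_contra hle
      push_neg at hle
      have h1 : m ^ 2 - 18 * n ^ 2 ≤ 0 := by linarith
      have h2 : m ^ 2 * (m ^ 2 - 18 * n ^ 2) ≤ 0 := mul_nonpos_of_nonneg_of_nonpos hm2.le h1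
      nlinarith [sq_nonneg U]
    have h9 : 0 < m ^ 2 - 9 * n ^ 2 := by nlinarith
    set C : ℤ := m ^ 2 - 9 * n ^ 2 - U with hC_def
    set D : ℤ := m ^ 2 - 9 * n ^ 2 + U with hD_def
    have hCD : C * D = 108 * n ^ 4 := by rw [hC_def, hD_def]; linear_combination -hU
    have hDpos : 0 < D := by rw [hD_def]; linarith
    have hCpos : 0 < C := by nlinarith
    -- both even
    have hCeven : Even C := by
      by_contra hodd
      have hodd' : Odd C := Int.not_even_iff_odd.mp hodd
      have hoddD : Odd D := by
        obtain ⟨r, hr⟩ := hodd'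
        exact ⟨r + U, by rw [hD_def]; rw [hC_def] at hr; linarith⟩
      have : Odd (C * D) := hodd'.mul hoddD
      rw [hCD] at this
      exact (Int.not_odd_iff_even.mpr ⟨54 * n ^ 4, by ring⟩) this
    obtain ⟨C', hC'⟩ := hCeven
    have hC'' : C = 2 * C' := by rw [hC']; ring
    have hD'' : D = 2 * (m ^ 2 - 9 * n ^ 2 - C') := by
      rw [hD_def]
      rw [hC_def] at hC''
      linarith
    set D' : ℤ := m ^ 2 - 9 * n ^ 2 - C' with hD'def
    have hC'D' : C' * D' = 27 * n ^ 4 := by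
      have h4 : (4:ℤ) * (C' * D') = 4 * (27 * n ^ 4) := by
        calc (4:ℤ) * (C' * D') = (2 * C') * (2 * D') := by ring
        _ = C * D := by rw [← hC'', ← hD'']
        _ = 108 * n ^ 4 := hCD
        _ = 4 * (27 * n ^ 4) := by ring
      exact mul_left_cancel₀ (by norm_num) h4
    have hsumCD : C' + D' = m ^ 2 - 9 * n ^ 2 := by rw [hD'def]; ring
    have hC'pos : 0 < C' := by linarith [hC'']
    have hD'pos : 0 < D' := by linarith [hD'']
    -- coprime C' D'
    have hcopCD : IsCoprime C' D' := by
      rw [Int.isCoprime_iff_gcd_eq_one]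
      by_contra hg
      obtain ⟨p, hp, hpdvd⟩ := Nat.exists_prime_and_dvd hg
      have hpC : (p:ℤ) ∣ C' := dvd_trans (Int.natCast_dvd_natCast.mpr hpdvd) (Int.gcd_dvd_left _ _)
      have hpD : (p:ℤ) ∣ D' := dvd_trans (Int.natCast_dvd_natCast.mpr hpdvd) (Int.gcd_dvd_right _ _)
      have hpprime : Prime (p:ℤ) := int_prime_of_nat hp
      have hp27 : (p:ℤ) ∣ 27 * n ^ 4 := hC'D' ▸ hpC.mul_right D'
      have hpS : (p:ℤ) ∣ m ^ 2 - 9 * n ^ 2 := hsumCD ▸ dvd_add hpC hpD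
      rcases hpprime.dvd_mul.mp hp27 with h27 | hn4'
      · have hp3 : (p:ℤ) = 3 := by
          have h33 : (p:ℤ) ∣ 3 ^ 3 := by norm_num at h27 ⊢; exact h27
          have h3' := hpprime.dvd_of_dvd_pow h33
          have hnat : p ∣ 3 := by exact_mod_cast h3'
          have := (Nat.prime_dvd_prime_iff_eq hp Nat.prime_three).mp hnat
          exact_mod_cast this
        rw [hp3] at hpS
        have h3m2 : (3:ℤ) ∣ m ^ 2 := by
          obtain ⟨t, ht⟩ := hpS
          exact ⟨t + 3 * n ^ 2, by linarith⟩
        exact h3m (int3 (k := 2) h3m2)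
      · have hpn : (p:ℤ) ∣ n := hpprime.dvd_of_dvd_pow hn4'
        have hpm2 : (p:ℤ) ∣ m ^ 2 := by
          obtain ⟨t, ht⟩ := hpn
          obtain ⟨s, hs⟩ := hpS
          exact ⟨s + 9 * p * t ^ 2, by rw [ht] at hs; linarith [hs]⟩
        have hpm : (p:ℤ) ∣ m := hpprime.dvd_of_dvd_pow hpm2
        have hunit : IsUnit ((p:ℤ)) := hco.isUnit_of_dvd' hpm hpn
        rw [Int.isUnit_iff] at hunit
        have := hp.two_le
        omega
    -- factor
    obtain ⟨e, f, he0, hf0, hcase⟩ := factor27 hC'pos.le hD'pos.le hcopCD hC'D'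
    -- in both cases, C' + D' = e⁴ + 27 f⁴ with ef = ±n (after suitable naming)
    have main : ∀ e f : ℤ, e ^ 4 * (27 * f ^ 4) = 27 * n ^ 4 →
        e ^ 4 + 27 * f ^ 4 = m ^ 2 - 9 * n ^ 2 → IsCoprime e f → False := by
      intro e f hprod0 hsum0 hcop'
      have hprod : (e * f) ^ 4 = n ^ 4 := by
        have h27 : (27:ℤ) * ((e * f) ^ 4) = 27 * (n ^ 4) := by linear_combination hprod0
        exact mul_left_cancel₀ (by norm_num) h27
      have hef_ne : e * f ≠ 0 := by
        intro h0
        rw [h0] at hprod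
        simp at hprod
        exact hn0 (by nlinarith [hprod])
      have he_ne : e ≠ 0 := fun h => hef_ne (by rw [h, zero_mul])
      have hf_ne : f ≠ 0 := fun h => hef_ne (by rw [h, mul_zero])
      have hnsq : n ^ 2 = e ^ 2 * f ^ 2 := by
        have := sq_eq_of_pow4 hprod
        rw [← this]; ring
      have hAeq : m ^ 2 = e ^ 4 + 9 * e ^ 2 * f ^ 2 + 27 * f ^ 4 := by
        nlinarith [hsum0, hnsq]
      have habs : e.natAbs * f.natAbs = n.natAbs := by
        have := pow4_natAbs_eq hprod
        rwa [Int.natAbs_mul] at this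
      have he1 : 0 < e.natAbs := Int.natAbs_pos.mpr he_ne
      have hf1 : 0 < f.natAbs := Int.natAbs_pos.mpr hf_ne
      have hfle : f.natAbs ≤ n.natAbs := by
        have h3 := Nat.le_mul_of_pos_left f.natAbs he1
        omega
      have hres := (ih (N - 1) (by omega)).1 e f m (by omega) hcop' hAeq
      exact hf_ne hres
    rcases hcase with ⟨hCe, hDf⟩ | ⟨hCe, hDf⟩
    · -- C' = e⁴, D' = 27 f⁴
      refine main e f ?_ ?_ ?_
      · rw [← hCe, ← hDf]; exact hC'D'
      · rw [← hCe, ← hDf]; exact hsumCD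
      · have heC : e ∣ C' := by rw [hCe]; exact ⟨e ^ 3, by ring⟩
        have hfD : f ∣ D' := by rw [hDf]; exact ⟨27 * f ^ 3, by ring⟩
        exact (hcopCD.of_isCoprime_of_dvd_left heC).of_isCoprime_of_dvd_right hfD
    · -- C' = 27 e⁴, D' = f⁴
      refine main f e ?_ ?_ ?_
      · calc f ^ 4 * (27 * e ^ 4) = (27 * e ^ 4) * f ^ 4 := by ring
          _ = C' * D' := by rw [hCe, hDf]
          _ = 27 * n ^ 4 := hC'D'
      · calc f ^ 4 + 27 * e ^ 4 = (27 * e ^ 4) + f ^ 4 := by ring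
          _ = C' + D' := by rw [hCe, hDf]
          _ = m ^ 2 - 9 * n ^ 2 := hsumCD
      · have heC : e ∣ C' := by rw [hCe]; exact ⟨27 * e ^ 3, by ring⟩
        have hfD : f ∣ D' := by rw [hDf]; exact ⟨f ^ 3, by ring⟩
        exact ((hcopCD.of_isCoprime_of_dvd_left heC).of_isCoprime_of_dvd_right hfD).symm


theorem mordell_int (p r c : ℤ) (hc : c ≠ 0) (hco : IsCoprime p c)
    (hr : r ^ 2 = p ^ 3 - 27 * c ^ 6) : p = 3 * c ^ 2 ∧ r = 0 := by
  obtain ⟨a, hp_eq⟩ : ∃ a : ℤ, p = a + 3 * c ^ 2 := ⟨p - 3 * c ^ 2, by ring⟩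
  subst hp_eq
  obtain ⟨Q, hQ_def⟩ : ∃ Q : ℤ, Q = a ^ 2 + 9 * a * c ^ 2 + 27 * c ^ 4 := ⟨_, rfl⟩
  have hrQ : r ^ 2 = a * Q := by rw [hQ_def]; linear_combination hr
  have hc4 : (0:ℤ) < c ^ 4 := by positivity
  have hQpos : 0 < Q := by
    rw [hQ_def]
    nlinarith [sq_nonneg (2 * a + 9 * c ^ 2), hc4]
  have hann : 0 ≤ a := by nlinarith [sq_nonneg r]
  have hcoac : IsCoprime a c := by
    have h1 := IsCoprime.add_mul_right_left hco (-3 * c)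
    have h2 : a + 3 * c ^ 2 + -3 * c * c = a := by ring
    rwa [h2] at h1
  rcases hann.lt_or_eq.symm with ha0 | hapos
  · -- a = 0
    constructor
    · rw [← ha0]; ring
    · have : r ^ 2 = 0 := by rw [hrQ, ← ha0]; ring
      exact pow_eq_zero_iff (by norm_num) |>.mp this
  · -- a > 0
    exfalso
    by_cases h3a : (3:ℤ) ∣ a
    · -- 3 | a
      obtain ⟨e, rfl⟩ := h3a
      have h3c : ¬ (3:ℤ) ∣ c := fun h => not_unit_three (hcoac.isUnit_of_dvd' ⟨e, rfl⟩ h)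
      by_cases h3e : (3:ℤ) ∣ e
      · -- a = 9f
        obtain ⟨f, rfl⟩ := h3e
        obtain ⟨G, hG_def⟩ : ∃ G : ℤ, G = 3 * f ^ 2 + 3 * f * c ^ 2 + c ^ 4 := ⟨_, rfl⟩
        have h3G : ¬ (3:ℤ) ∣ G := by
          rintro ⟨t, ht⟩
          apply h3c
          refine int3 (k := 4) ⟨t - f ^ 2 - f * c ^ 2, ?_⟩
          rw [hG_def] at ht
          linarith
        have hrG : r ^ 2 = 243 * (f * G) := by
          rw [hG_def]; linear_combination hrQ + 9 * f * hQ_def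
        obtain ⟨r₁, rfl⟩ : (3:ℤ) ∣ r := int3 (k := 2) ⟨81 * (f * G), by linear_combination hrG⟩
        have h1 : r₁ ^ 2 = 27 * (f * G) :=
          mul_left_cancel₀ (by norm_num : (9:ℤ) ≠ 0) (by linear_combination hrG)
        obtain ⟨r₂, rfl⟩ : (3:ℤ) ∣ r₁ := int3 (k := 2) ⟨9 * (f * G), by linear_combination h1⟩
        have h2 : r₂ ^ 2 = 3 * (f * G) :=
          mul_left_cancel₀ (by norm_num : (9:ℤ) ≠ 0) (by linear_combination h1)
        obtain ⟨r₃, rfl⟩ : (3:ℤ) ∣ r₂ := int3 (k := 2) ⟨f * G, by linear_combination h2⟩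
        have h3 : 3 * r₃ ^ 2 = f * G :=
          mul_left_cancel₀ (by norm_num : (3:ℤ) ≠ 0) (by linear_combination h2)
        have h3f : (3:ℤ) ∣ f := by
          rcases Int.prime_three.dvd_mul.mp ⟨r₃ ^ 2, h3.symm⟩ with h | h
          · exact h
          · exact absurd h h3G
        obtain ⟨h, rfl⟩ := h3f
        have h4 : r₃ ^ 2 = h * G :=
          mul_left_cancel₀ (by norm_num : (3:ℤ) ≠ 0) (by linear_combination h3)
        have hGpos : 0 < G := by
          rw [hG_def]; nlinarith [sq_nonneg (2 * (3 * h) + c ^ 2), hc4]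
        have hhpos : 0 < h := by linarith
        have hhc : IsCoprime h c := by
          have hd : h ∣ 3 * (3 * (3 * h)) := ⟨27, by ring⟩
          exact hcoac.of_isCoprime_of_dvd_left hd
        have hcophG : IsCoprime h G := by
          rw [Int.isCoprime_iff_gcd_eq_one]
          by_contra hg
          obtain ⟨q, hq, hqdvd⟩ := Nat.exists_prime_and_dvd hg
          have hqh : (q:ℤ) ∣ h := dvd_trans (Int.natCast_dvd_natCast.mpr hqdvd) (Int.gcd_dvd_left _ _)
          have hqG : (q:ℤ) ∣ G := dvd_trans (Int.natCast_dvd_natCast.mpr hqdvd) (Int.gcd_dvd_right _ _)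
          have hqprime : Prime (q:ℤ) := int_prime_of_nat hq
          have hqc : (q:ℤ) ∣ c := by
            refine hqprime.dvd_of_dvd_pow (?_ : (q:ℤ) ∣ c ^ 4)
            obtain ⟨t, ht⟩ := hqh
            obtain ⟨w, hw⟩ := hqG
            rw [hG_def] at hw
            exact ⟨w - 27 * q * t ^ 2 - 9 * t * c ^ 2,
              by linear_combination hw - (27 * (h + q * t) + 9 * c ^ 2) * ht⟩
          have hunit : IsUnit ((q:ℤ)) := hhc.isUnit_of_dvd' hqh hqc
          rw [Int.isUnit_iff] at hunit
          have := hq.two_le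
          omega
        obtain ⟨s, hs⟩ := Int.sq_of_isCoprime hcophG h4.symm
        have hs' : h = s ^ 2 := by
          rcases hs with h' | h'
          · exact h'
          · exfalso; nlinarith [sq_nonneg s]
        obtain ⟨t, ht⟩ := Int.sq_of_isCoprime hcophG.symm
          (by linear_combination -h4 : G * h = r₃ ^ 2)
        have ht' : G = t ^ 2 := by
          rcases ht with h' | h'
          · exact h'
          · exfalso; nlinarith [sq_nonneg t]
        have hfinal : t ^ 2 = c ^ 4 + 9 * c ^ 2 * s ^ 2 + 27 * s ^ 4 := by
          rw [← ht', hG_def, hs']; ring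
        have hcs : IsCoprime c s := by
          have hd : s ∣ h := by rw [hs']; exact ⟨s, by ring⟩
          exact (hhc.of_isCoprime_of_dvd_left hd).symm
        have hs_ne : s ≠ 0 := by
          intro h0
          rw [h0] at hs'
          simp at hs'
          omega
        exact hs_ne ((descent (2 * s.natAbs)).1 c s t le_rfl hcs hfinal)
      · -- 3 | a but 9 ∤ a : 3-adic valuation contradiction
        obtain ⟨H, hH_def⟩ : ∃ H : ℤ, H = e ^ 2 + 3 * e * c ^ 2 + 3 * c ^ 4 := ⟨_, rfl⟩
        have h3H : ¬ (3:ℤ) ∣ H := by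
          rintro ⟨t, ht⟩
          apply h3e
          refine int3 (k := 2) ⟨t - e * c ^ 2 - c ^ 4, ?_⟩
          rw [hH_def] at ht
          linarith
        have hrH : r ^ 2 = 27 * (e * H) := by
          rw [hH_def]; linear_combination hrQ + 3 * e * hQ_def
        obtain ⟨r₁, rfl⟩ : (3:ℤ) ∣ r := int3 (k := 2) ⟨9 * (e * H), by linear_combination hrH⟩
        have h1 : r₁ ^ 2 = 3 * (e * H) :=
          mul_left_cancel₀ (by norm_num : (9:ℤ) ≠ 0) (by linear_combination hrH)
        obtain ⟨r₂, rfl⟩ : (3:ℤ) ∣ r₁ := int3 (k := 2) ⟨e * H, by linear_combination h1⟩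
        have h2 : 3 * r₂ ^ 2 = e * H :=
          mul_left_cancel₀ (by norm_num : (3:ℤ) ≠ 0) (by linear_combination h1)
        rcases Int.prime_three.dvd_mul.mp ⟨r₂ ^ 2, h2.symm⟩ with h | h
        · exact h3e h
        · exact h3H h
    · -- 3 ∤ a
      have hcoaQ : IsCoprime a Q := by
        rw [Int.isCoprime_iff_gcd_eq_one]
        by_contra hg
        obtain ⟨q, hq, hqdvd⟩ := Nat.exists_prime_and_dvd hg
        have hqa : (q:ℤ) ∣ a := dvd_trans (Int.natCast_dvd_natCast.mpr hqdvd) (Int.gcd_dvd_left _ _)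
        have hqQ : (q:ℤ) ∣ Q := dvd_trans (Int.natCast_dvd_natCast.mpr hqdvd) (Int.gcd_dvd_right _ _)
        have hqprime : Prime (q:ℤ) := int_prime_of_nat hq
        have hq27 : (q:ℤ) ∣ 27 * c ^ 4 := by
          obtain ⟨t, ht⟩ := hqa
          obtain ⟨w, hw⟩ := hqQ
          rw [hQ_def] at hw
          exact ⟨w - q * t ^ 2 - 9 * t * c ^ 2,
            by linear_combination hw - (a + q * t + 9 * c ^ 2) * ht⟩
        rcases hqprime.dvd_mul.mp hq27 with h27 | hc4'
        · have hq3 : (q:ℤ) = 3 := by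
            have h33 : (q:ℤ) ∣ 3 ^ 3 := by norm_num at h27 ⊢; exact h27
            have h3' := hqprime.dvd_of_dvd_pow h33
            have hnat : q ∣ 3 := by exact_mod_cast h3'
            have := (Nat.prime_dvd_prime_iff_eq hq Nat.prime_three).mp hnat
            exact_mod_cast this
          rw [hq3] at hqa
          exact h3a hqa
        · have hqc : (q:ℤ) ∣ c := hqprime.dvd_of_dvd_pow hc4'
          have hunit : IsUnit ((q:ℤ)) := hcoac.isUnit_of_dvd' hqa hqc
          rw [Int.isUnit_iff] at hunit
          have := hq.two_le
          omega
      obtain ⟨s, hs⟩ := Int.sq_of_isCoprime hcoaQ hrQ.symm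
      have hs' : a = s ^ 2 := by
        rcases hs with h' | h'
        · exact h'
        · exfalso; nlinarith [sq_nonneg s]
      obtain ⟨t, ht⟩ := Int.sq_of_isCoprime hcoaQ.symm
        (by linear_combination -hrQ : Q * a = r ^ 2)
      have ht' : Q = t ^ 2 := by
        rcases ht with h' | h'
        · exact h'
        · exfalso; nlinarith [sq_nonneg t]
      have hfinal : t ^ 2 = s ^ 4 + 9 * s ^ 2 * c ^ 2 + 27 * c ^ 4 := by
        rw [← ht', hQ_def, hs']; ring
      have hcsc : IsCoprime s c := by
        have hd : s ∣ a := by rw [hs']; exact ⟨s, by ring⟩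
        exact hcoac.of_isCoprime_of_dvd_left hd
      exact hc ((descent (2 * c.natAbs)).1 s c t le_rfl hcsc hfinal)

theorem mordell_rat (x y : ℚ) (h : y ^ 2 = x ^ 3 - 27) : x = 3 ∧ y = 0 := by
  obtain ⟨p, q, hq0, hx, hcopq⟩ : ∃ (p q : ℤ), 0 < q ∧ (x = (p:ℚ)/(q:ℚ)) ∧ IsCoprime p q :=
    ⟨x.num, (x.den : ℤ), by exact_mod_cast x.pos, by push_cast; exact (Rat.num_div_den x).symm,
      Int.isCoprime_iff_nat_coprime.mpr (by simpa using x.reduced)⟩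
  obtain ⟨r, t, ht0, hy, hcors⟩ : ∃ (r t : ℤ), 0 < t ∧ (y = (r:ℚ)/(t:ℚ)) ∧ IsCoprime r t :=
    ⟨y.num, (y.den : ℤ), by exact_mod_cast y.pos, by push_cast; exact (Rat.num_div_den y).symm,
      Int.isCoprime_iff_nat_coprime.mpr (by simpa using y.reduced)⟩
  have hqne : (q:ℚ) ≠ 0 := Int.cast_ne_zero.mpr hq0.ne'
  have htne : (t:ℚ) ≠ 0 := Int.cast_ne_zero.mpr ht0.ne'
  rw [hx, hy] at h
  field_simp at h
  have keyZ : r ^ 2 * q ^ 3 = (p ^ 3 - 27 * q ^ 3) * t ^ 2 := by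
    have : ((r ^ 2 * q ^ 3 : ℤ) : ℚ) = (((p ^ 3 - 27 * q ^ 3) * t ^ 2 : ℤ) : ℚ) := by
      push_cast
      linear_combination h
    exact_mod_cast this
  -- q³ = t²
  have hd1 : q ^ 3 ∣ t ^ 2 := by
    have hdvd : q ^ 3 ∣ t ^ 2 * p ^ 3 := ⟨r ^ 2 + 27 * t ^ 2, by linear_combination -keyZ⟩
    exact (hcopq.symm.pow (m := 3) (n := 3)).dvd_of_dvd_mul_right hdvd
  have hd2 : t ^ 2 ∣ q ^ 3 := by
    have hdvd : t ^ 2 ∣ r ^ 2 * q ^ 3 := ⟨p ^ 3 - 27 * q ^ 3, by linear_combination keyZ⟩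
    exact (hcors.symm.pow (m := 2) (n := 2)).dvd_of_dvd_mul_left hdvd
  have hq3t2 : q ^ 3 = t ^ 2 :=
    Int.dvd_antisymm (by positivity) (by positivity) hd1 hd2
  -- extract c with q = c², t = c³
  have hqdvdt : q ∣ t := by
    have h2 : q ^ 2 ∣ t ^ 2 := by
      rw [← hq3t2]
      exact ⟨q, by ring⟩
    exact (Int.pow_dvd_pow_iff (by norm_num : 2 ≠ 0)).mp h2
  obtain ⟨c, hc⟩ := hqdvdt
  have hcpos : 0 < c := by nlinarith
  have hc2 : c ^ 2 = q := by
    have h2 : q * (c ^ 2) = q * q := by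
      have : (q * c) ^ 2 = q ^ 3 := by rw [← hc, ← hq3t2]
      nlinarith [this]
    have := mul_left_cancel₀ hq0.ne' h2
    nlinarith [this, sq_nonneg (c - q), sq_nonneg (c + q)]
  have ht3 : t = c ^ 3 := by rw [hc, ← hc2]; ring
  have hcne : c ≠ 0 := hcpos.ne'
  have hr2 : r ^ 2 = p ^ 3 - 27 * c ^ 6 := by
    rw [← hc2, ht3] at keyZ
    have h6 : r ^ 2 * c ^ 6 = (p ^ 3 - 27 * c ^ 6) * c ^ 6 := by linear_combination keyZ
    exact mul_right_cancel₀ (pow_ne_zero 6 hcne) h6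
  have hcopc : IsCoprime p c :=
    hcopq.of_isCoprime_of_dvd_right (by rw [← hc2]; exact ⟨c, by ring⟩)
  obtain ⟨hp3, hr0⟩ := mordell_int p r c hcne hcopc hr2
  have hcu : IsUnit c := hcopc.isUnit_of_dvd' ⟨3 * c, by rw [hp3]; ring⟩ dvd_rfl
  have hc1 : c = 1 := by
    rw [Int.isUnit_iff] at hcu
    omega
  have hp : p = 3 := by rw [hp3, hc1]; ring
  have hq1 : q = 1 := by rw [← hc2, hc1]; ring
  constructor
  · rw [hx, hp, hq1]; norm_num
  · rw [hy, hr0]; norm_num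

end Aux27


noncomputable section

namespace Aux27

open WeierstrassCurve.Affine

def W : WeierstrassCurve.Affine ℚ := { a₁ := 0, a₂ := 0, a₃ := 0, a₄ := 0, a₆ := -27 }

lemma hW3 : W.Nonsingular 3 0 := by
  rw [nonsingular_iff, equation_iff]
  constructor
  · show (0:ℚ)^2 + 0*3*0 + 0*0 = 3^3 + 0*3^2 + 0*3 + (-27)
    norm_num
  · left
    show (0:ℚ)*0 ≠ 3*3^2 + 2*0*3 + 0
    norm_num

def P0 : W.Point := .some _ _ hW3

lemma points_eq (P : W.Point) : P = 0 ∨ P = P0 := by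
  cases P with
  | zero => exact Or.inl rfl
  | @some x y h =>
    right
    have heq : y ^ 2 = x ^ 3 - 27 := by
      have := (equation_iff x y).mp h.1
      show _ = _
      rw [show W.a₁ = 0 from rfl, show W.a₂ = 0 from rfl, show W.a₃ = 0 from rfl,
        show W.a₄ = 0 from rfl, show W.a₆ = -27 from rfl] at this
      linarith
    obtain ⟨hx, hy⟩ := mordell_rat x y heq
    subst hx; subst hy
    rfl

lemma P0_add_P0 : P0 + P0 = 0 := by
  refine Point.add_self_of_Y_eq ?_
  show (0:ℚ) = W.negY 3 0
  rw [negY, show W.a₁ = 0 from rfl, show W.a₃ = 0 from rfl]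
  norm_num

lemma P0_ne_zero : P0 ≠ 0 := Point.some_ne_zero hW3

open Classical in
def toZMod : W.Point → ZMod 2 := fun P => if P = 0 then 0 else 1

def theEquiv : W.Point ≃+ ZMod 2 where
  toFun := toZMod
  invFun := fun k => if k = 0 then 0 else P0
  left_inv := by
    intro P
    rcases points_eq P with h | h <;> subst h <;> simp [toZMod, P0_ne_zero]
  right_inv := by
    intro k
    fin_cases k
    · show toZMod (if (0:ZMod 2) = 0 then 0 else P0) = 0
      rw [if_pos rfl]; simp [toZMod]
    · show toZMod (if (1:ZMod 2) = 0 then 0 else P0) = 1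
      rw [if_neg (by decide)]; simp [toZMod, P0_ne_zero]
  map_add' := by
    intro P Q
    rcases points_eq P with h | h <;> rcases points_eq Q with h' | h' <;> subst h <;> subst h' <;>
      simp [toZMod, P0_ne_zero, P0_add_P0]
    all_goals decide

end Aux27

end

/-- The Mordell–Weil group of the elliptic curve `E : y² = x³ - 27` over `ℚ` is
isomorphic to `ℤ/2ℤ`. -/
theorem stmt_4 :
    letI W : WeierstrassCurve.Affine ℚ :=
      { a₁ := 0, a₂ := 0, a₃ := 0, a₄ := 0, a₆ := -27 }
    Nonempty (W.Point ≃+ ZMod 2) := by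
  exact ⟨Aux27.theEquiv⟩
end

section
/- Let D be a squarefree integer. For any rational point (x, y) on E^D: y² = x³ - 27D³, the three elements (9D² + y√D)³, (3xD)³, (9D² - y√D)³ of ℚ(√D) form an arithmetic progression. -/
/-- For any rational point `(x, y)` on `E^D : y² = x³ - 27D³`, the elements
`(9D² + y√D)³, (3xD)³, (9D² - y√D)³` of `ℚ(√D)` form an arithmetic progression. -/
theorem stmt_14 (D : ℤ) (hD : Squarefree D) (hD0 : D ≠ 0)
    (K : Type*) [Field K] [Algebra ℚ K] (α : K) (hα : α ^ 2 = (D : K))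
    (x y : ℚ) (hxy : y ^ 2 = x ^ 3 - 27 * (D : ℚ) ^ 3) :
    (3 * (x : K) * (D : K)) ^ 3 - (9 * (D : K) ^ 2 + (y : K) * α) ^ 3 =
      (9 * (D : K) ^ 2 - (y : K) * α) ^ 3 - (3 * (x : K) * (D : K)) ^ 3 := by
  haveI : CharZero K := algebraRat.charZero K
  have hK : (y : K) ^ 2 = (x : K) ^ 3 - 27 * (D : K) ^ 3 := by
    exact_mod_cast congrArg (Rat.cast (K := K)) hxy
  linear_combination (-54 * (D : K) ^ 3) * hK + (-54 * (D : K) ^ 2 * (y : K) ^ 2) * hα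
end

section
/- The point (10, 28) lies on the curve y² = x³ - 27·2³ = x³ - 216, and consequently (9 + 7√2)³, 15³, (9 - 7√2)³ is an arithmetic progression in ℚ(√2) with 15³ ≠ (9+7√2)³, exhibiting a non-trivial arithmetic progression of three cubes over ℚ(√2). -/
/-- The point `(10, 28)` lies on `y² = x³ - 216`, and consequently
`(9 + 7√2)³, 15³, (9 - 7√2)³` is an arithmetic progression in `ℚ(√2)` with
`15³ ≠ (9 + 7√2)³`: a non-trivial arithmetic progression of three cubes over `ℚ(√2)`. -/
theorem stmt_17 (K : Type*) [Field K] [Algebra ℚ K] (α : K) (hα : α ^ 2 = 2) :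
    (28 : ℚ) ^ 2 = 10 ^ 3 - 216 ∧
    ((15 : K) ^ 3 - (9 + 7 * α) ^ 3 = (9 - 7 * α) ^ 3 - (15 : K) ^ 3) ∧
    (15 : K) ^ 3 ≠ (9 + 7 * α) ^ 3 := by
  have hchar : CharZero K := charZero_of_injective_algebraMap (algebraMap ℚ K).injective
  have hα0 : α ≠ 0 := by
    intro h; rw [h] at hα; simp at hα
  have hcube : (9 + 7 * α) ^ 3 = 3375 + 2387 * α := by
    have : (9 + 7 * α) ^ 3 = 729 + 1701 * α + 1323 * α ^ 2 + 343 * (α ^ 2 * α) := by ring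
    rw [this, hα]; ring
  have hcube' : (9 - 7 * α) ^ 3 = 3375 - 2387 * α := by
    have : (9 - 7 * α) ^ 3 = 729 - 1701 * α + 1323 * α ^ 2 - 343 * (α ^ 2 * α) := by ring
    rw [this, hα]; ring
  refine ⟨by norm_num, ?_, ?_⟩
  · rw [hcube, hcube']; ring
  · rw [hcube]
    intro h
    have : (2387 : K) * α = 0 := by linear_combination -h
    rcases mul_eq_zero.mp this with h' | h'
    · exact (by norm_num : (2387:K) ≠ 0) h'
    · exact hα0 h'
end

section
/- The point (7, 98) lies on the curve y² = x³ - 27·(-7)³ = x³ + 9261, and consequently (9·49 + 98√-7)³, (3·7·(-7))³, (9·49 - 98√-7)³ form a non-constant arithmetic progression of cubes in ℚ(√-7). -/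
/-- The point `(7, 98)` lies on `y² = x³ + 9261`, and consequently
`(9·49 + 98√-7)³, (3·7·(-7))³, (9·49 - 98√-7)³` is a non-constant arithmetic
progression of cubes in `ℚ(√-7)`. -/
theorem stmt_18 (K : Type*) [Field K] [Algebra ℚ K] (α : K) (hα : α ^ 2 = -7) :
    (98 : ℚ) ^ 2 = 7 ^ 3 + 9261 ∧
    ((3 * 7 * (-7) : K) ^ 3 - (9 * 49 + 98 * α) ^ 3 =
      (9 * 49 - 98 * α) ^ 3 - (3 * 7 * (-7) : K) ^ 3) ∧
    ¬((9 * 49 + 98 * α) ^ 3 = (3 * 7 * (-7) : K) ^ 3 ∧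
      (3 * 7 * (-7) : K) ^ 3 = (9 * 49 - 98 * α) ^ 3) := by
  haveI : CharZero K := charZero_of_injective_algebraMap (algebraMap ℚ K).injective
  refine ⟨by norm_num, by linear_combination (-25412184 : K) * hα, ?_⟩
  rintro ⟨h1, -⟩
  have hz : (50589070 : K) * α = 0 := by
    linear_combination h1 - (12706092 + 941192 * α) * hα
  have : α = 0 := by
    rcases mul_eq_zero.mp hz with h | h
    · exact absurd h (by norm_num)
    · exact h
  rw [this] at hα
  norm_num at hα
end
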